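/- Let $A$ be a left-symmetric conformal algebra and $\omega^1, \omega^2: A\times A \to A^{*c}$ two invariant 2-cocycles. The $T^*$-extensions $T^*_{\omega^1}A$ and $T^*_{\omega^2}A$ are equivalent if and only if there exists $\theta \in \mathrm{CHom}(A, A^{*c})$ such that $\omega^1_\lambda(a,b) - \omega^2_\lambda(a,b) = (L^*_A(a))_\lambda\theta(b) - \theta(a_\lambda b)$ for all $a, b \in A$. In this case, $\beta_\lambda(a,b) := \frac{1}{2}(\theta(a)_\lambda b + \theta(b)_{-\lambda} a)$ is a symmetric invariant bilinear form on $A$, and the extensions are isometrically equivalent if and only if additionally $\beta = 0$. -/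
import Mathlib


/- Encoding conventions.
A `ℂ[∂]`-module is encoded as a complex vector space `A` together with an
endomorphism `D : Module.End ℂ A` (the action of `∂`).
A polynomial `Σ cₙ λⁿ ∈ A[λ]` is encoded by its coefficient family `ℕ →₀ A`,
and `ev l p` is its evaluation at `λ = l`.  Since `ℂ` is infinite, a polynomial
identity in the formal variables `λ, μ, …` is equivalent to the corresponding
family of identities for all complex values of the variables, which is how all
axioms are stated below.
A `λ`-product `a ⊗ b ↦ a_λ b ∈ A[λ]` is encoded as `mul : A → A → (ℕ →₀ A)`
(the coefficients of `a_λ b`), its evaluation at `λ = l` being `ev l (mul a b)`.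
`substNeg D p` is the result of substituting the variable of `p` by `-∂-λ`:
it is again a polynomial in `λ` with coefficients `ℕ →₀ A`, so that
`b_{-∂-λ} a` is encoded as `substNeg D (mul b a)` (as a polynomial in `λ`). -/

namespace LSCpaper

open Finsupp

variable {A M V : Type*} [AddCommGroup A] [Module ℂ A] [AddCommGroup M] [Module ℂ M]
  [AddCommGroup V] [Module ℂ V]

/-- Evaluation of a polynomial with coefficients in `V` at a complex number. -/
noncomputable def ev (l : ℂ) (p : ℕ →₀ V) : V := p.sum fun n c => l ^ n • c

/-- Substitution of `-∂ - λ` for the variable of `p`; the result is the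
coefficient family (in `λ`) of the resulting polynomial. -/
noncomputable def substNeg (D : Module.End ℂ A) (p : ℕ →₀ A) : ℕ →₀ A :=
  p.sum fun i c => ∑ k ∈ Finset.range (i + 1),
    Finsupp.single k ((((-1 : ℂ) ^ k * (i.choose k : ℂ))) • ((-D) ^ (i - k)) c)

/-- `ℂ`-bilinearity of a `λ`-product. -/
def Bilin (f : A → M → ℕ →₀ V) : Prop :=
  (∀ a a' b, f (a + a') b = f a b + f a' b) ∧
  (∀ (r : ℂ) (a : A) (b : M), f (r • a) b = r • f a b) ∧
  (∀ a b b', f a (b + b') = f a b + f a b') ∧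
  (∀ (r : ℂ) (a : A) (b : M), f a (r • b) = r • f a b)

/-- `A` with `∂`-action `D` and `λ`-product `mul` is a left-symmetric conformal
algebra. -/
structure IsLSC (D : Module.End ℂ A) (mul : A → A → ℕ →₀ A) : Prop where
  bilin : Bilin mul
  sesq1 : ∀ (l : ℂ) (a b : A), ev l (mul (D a) b) = (-l) • ev l (mul a b)
  sesq2 : ∀ (l : ℂ) (a b : A), ev l (mul a (D b)) = D (ev l (mul a b)) + l • ev l (mul a b)
  lsym : ∀ (l m : ℂ) (a b c : A),
    ev (l + m) (mul (ev l (mul a b)) c) - ev l (mul a (ev m (mul b c))) =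
      ev (l + m) (mul (ev m (mul b a)) c) - ev m (mul b (ev l (mul a c)))

/-- `A` with `∂`-action `D` and `λ`-bracket `br` is a Lie conformal algebra. -/
structure IsLieConf (D : Module.End ℂ A) (br : A → A → ℕ →₀ A) : Prop where
  bilin : Bilin br
  sesq1 : ∀ (l : ℂ) (a b : A), ev l (br (D a) b) = (-l) • ev l (br a b)
  sesq2 : ∀ (l : ℂ) (a b : A), ev l (br a (D b)) = D (ev l (br a b)) + l • ev l (br a b)
  skew : ∀ (l : ℂ) (a b : A), ev l (br a b) = - ev l (substNeg D (br b a))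
  jacobi : ∀ (l m : ℂ) (a b c : A),
    ev l (br a (ev m (br b c))) =
      ev (l + m) (br (ev l (br a b)) c) + ev m (br b (ev l (br a c)))

/-- The evaluated bracket `[a_λ b] = a_λ b - b_{-∂-λ} a` of the sub-adjacent
Lie conformal algebra. -/
noncomputable def brEv (D : Module.End ℂ A) (mul : A → A → ℕ →₀ A) (l : ℂ) (a b : A) : A :=
  ev l (mul a b) - ev l (substNeg D (mul b a))

end LSCpaper

namespace LSCpaper

variable {A : Type*} [AddCommGroup A] [Module ℂ A]

/-- Substitution of `λ - s` for the variable of a polynomial `p`. -/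
noncomputable def substShift {V : Type*} [AddCommGroup V] [Module ℂ V]
    (s : ℂ) (p : ℕ →₀ V) : ℕ →₀ V :=
  p.sum fun j c => ∑ k ∈ Finset.range (j + 1),
    Finsupp.single k (((j.choose k : ℂ) * (-s) ^ (j - k)) • c)

/-- Elements of the conformal dual `A^{*c}` are encoded as maps
`A → ℂ[λ]`; `IsDual` is the conformal-linearity condition
(`ℂ` carries the trivial `∂`-action, so `f_λ(∂ a) = λ f_λ(a)`). -/
def IsDual (D : Module.End ℂ A) (f : A → ℕ →₀ ℂ) : Prop :=
  (∀ a a', f (a + a') = f a + f a') ∧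
  (∀ (r : ℂ) (a : A), f (r • a) = r • f a) ∧
  (∀ (l : ℂ) (a : A), ev l (f (D a)) = l • ev l (f a))

/-- The action of `∂` on the conformal dual: `(∂ f)_λ = -λ f_λ`. -/
noncomputable def Dd (f : A → ℕ →₀ ℂ) : A → ℕ →₀ ℂ :=
  fun a => - Finsupp.mapDomain (· + 1) (f a)

/-- The evaluated action `L^*`:
`Lstar mul l a g = (L^*_A(a))_λ g` at `λ = l`, determined by
`((L^*_A(a))_λ g)_{λ+μ}(b) = - g_μ(a_λ b)`; the result is recorded through its
coefficient family in the total subscript `ν = λ + μ`. -/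
noncomputable def Lstar (mul : A → A → ℕ →₀ A) (l : ℂ) (a : A)
    (g : A → ℕ →₀ ℂ) : A → ℕ →₀ ℂ :=
  fun b => - substShift l (g (ev l (mul a b)))

/-- `ω` is a `2`-cocycle of `A` with coefficients in the module
`A^{*c}_L = (A^{*c}, L^*_A, 0)` (in evaluated form, `ω l a b = ω_λ(a,b)` at
`λ = l`). -/
def IsCocycleDual (D : Module.End ℂ A) (mul : A → A → ℕ →₀ A)
    (ω : ℂ → A → A → (A → ℕ →₀ ℂ)) : Prop :=
  ∀ (l m : ℂ) (a b c : A),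
    ω (l + m) (ev l (mul a b)) c - ω l a (ev m (mul b c)) - Lstar mul l a (ω m b c) =
      ω (l + m) (ev m (mul b a)) c - ω m b (ev l (mul a c)) - Lstar mul m b (ω l a c)

/-- `ω` is conformal bilinear with values in the conformal dual. -/
def IsC2Dual (D : Module.End ℂ A) (ω : ℂ → A → A → (A → ℕ →₀ ℂ)) : Prop :=
  (∀ l a a' b, ω l (a + a') b = ω l a b + ω l a' b) ∧
  (∀ (l r : ℂ) a b, ω l (r • a) b = r • ω l a b) ∧
  (∀ l a b b', ω l a (b + b') = ω l a b + ω l a b') ∧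
  (∀ (l r : ℂ) a b, ω l a (r • b) = r • ω l a b) ∧
  (∀ (l : ℂ) a b, ω l (D a) b = (-l) • ω l a b) ∧
  (∀ (l : ℂ) a b, ω l a (D b) = Dd (ω l a b) + l • ω l a b) ∧
  (∀ (l : ℂ) a b, IsDual D (ω l a b))

/-- A left-symmetric conformal algebra structure, given directly by the
evaluations `p l x y = x ·_λ y` at `λ = l` of the `λ`-product, with `∂`-action
`DX`. -/
structure IsLSCEv {X : Type*} [AddCommGroup X] [Module ℂ X]
    (DX : X → X) (p : ℂ → X → X → X) : Prop where
  addl : ∀ (l : ℂ) x x' y, p l (x + x') y = p l x y + p l x' y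
  smull : ∀ (l r : ℂ) x y, p l (r • x) y = r • p l x y
  addr : ∀ (l : ℂ) x y y', p l x (y + y') = p l x y + p l x y'
  smulr : ∀ (l r : ℂ) x y, p l x (r • y) = r • p l x y
  sesq1 : ∀ (l : ℂ) x y, p l (DX x) y = (-l) • p l x y
  sesq2 : ∀ (l : ℂ) x y, p l x (DX y) = DX (p l x y) + l • p l x y
  lsym : ∀ (l m : ℂ) x y z,
    p (l + m) (p l x y) z - p l x (p m y z) = p (l + m) (p m y x) z - p m y (p l x z)

/-- The `∂`-action on `A ⊕ A^{*c}`. -/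
noncomputable def DX (D : Module.End ℂ A) : A × (A → ℕ →₀ ℂ) → A × (A → ℕ →₀ ℂ) :=
  fun x => (D x.1, Dd x.2)

/-- The (evaluated) product `(a+f) ·^ω_λ (b+g) = a_λ b + ω_λ(a,b) + (L^*_A(a))_λ g`
on `A ⊕ A^{*c}`. -/
noncomputable def pExt (mul : A → A → ℕ →₀ A) (ω : ℂ → A → A → (A → ℕ →₀ ℂ)) :
    ℂ → A × (A → ℕ →₀ ℂ) → A × (A → ℕ →₀ ℂ) → A × (A → ℕ →₀ ℂ) :=
  fun l x y => (ev l (mul x.1 y.1), ω l x.1 y.1 + Lstar mul l x.1 y.2)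

/-- The (evaluated) symmetric bilinear form
`B_λ(a+f, b+g) = f_λ(b) + g_{-λ}(a)` on `A ⊕ A^{*c}`. -/
noncomputable def Bev : ℂ → A × (A → ℕ →₀ ℂ) → A × (A → ℕ →₀ ℂ) → ℂ :=
  fun l x y => ev l (x.2 y.1) + ev (-l) (y.2 x.1)

/-- Invariance of `ω` :
`ω_λ(a,b)_{λ+μ} c - ω_μ(b,c)_{-λ} a = ω_μ(b,a)_{λ+μ} c - ω_λ(a,c)_{-μ} b`. -/
def IsInvariantDual (ω : ℂ → A → A → (A → ℕ →₀ ℂ)) : Prop :=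
  ∀ (l m : ℂ) (a b c : A),
    ev (l + m) ((ω l a b) c) - ev (-l) ((ω m b c) a) =
      ev (l + m) ((ω m b a) c) - ev (-m) ((ω l a c) b)

end LSCpaper

namespace LSCpaper

variable {A : Type*} [AddCommGroup A] [Module ℂ A]

/-- `Φ` is an equivalence of the `T^*`-extensions `T^*_{ω¹} A` and
`T^*_{ω²} A`: an isomorphism of left-symmetric conformal algebras which is
the identity on the ideal `A^{*c}` and induces the identity on the factor
algebra `A`. -/
structure IsExtEquiv (D : Module.End ℂ A) (mul : A → A → ℕ →₀ A)
    (ω₁ ω₂ : ℂ → A → A → (A → ℕ →₀ ℂ))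
    (Φ : A × (A → ℕ →₀ ℂ) → A × (A → ℕ →₀ ℂ)) : Prop where
  add : ∀ x y, Φ (x + y) = Φ x + Φ y
  smul : ∀ (r : ℂ) x, Φ (r • x) = r • Φ x
  dcomm : ∀ x, Φ (DX D x) = DX D (Φ x)
  bij : Function.Bijective Φ
  hom : ∀ (l : ℂ) x y, Φ (pExt mul ω₁ l x y) = pExt mul ω₂ l (Φ x) (Φ y)
  idOnDual : ∀ f : A → ℕ →₀ ℂ, Φ (0, f) = (0, f)
  idOnQuot : ∀ x, (Φ x).1 = x.1

/-- The conditions on `θ : A → A^{*c}` appearing in the classification of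
equivalences of `T^*`-extensions: a `ℂ[∂]`-module homomorphism. -/
def IsTheta (D : Module.End ℂ A) (θ : A → (A → ℕ →₀ ℂ)) : Prop :=
  (∀ a a', θ (a + a') = θ a + θ a') ∧
  (∀ (r : ℂ) a, θ (r • a) = r • θ a) ∧
  (∀ a, θ (D a) = Dd (θ a))

/-- The evaluated bilinear form `β_λ(a,b) = ½ (θ(a)_λ b + θ(b)_{-λ} a)`
induced by `θ`. -/
noncomputable def betaEv (θ : A → (A → ℕ →₀ ℂ)) (l : ℂ) (a b : A) : ℂ :=
  (2⁻¹ : ℂ) * (ev l ((θ a) b) + ev (-l) ((θ b) a))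

section Helpers

variable {V : Type*} [AddCommGroup V] [Module ℂ V]

lemma ev_zero' (l : ℂ) : ev l (0 : ℕ →₀ V) = 0 := Finsupp.sum_zero_index

lemma ev_single' (l : ℂ) (n : ℕ) (v : V) : ev l (Finsupp.single n v) = l ^ n • v :=
  Finsupp.sum_single_index (smul_zero _)

lemma ev_add' (l : ℂ) (p q : ℕ →₀ V) : ev l (p + q) = ev l p + ev l q :=
  Finsupp.sum_add_index' (fun _ => smul_zero _) (fun _ _ _ => smul_add _ _ _)

/-- `ev` as an `AddMonoidHom`. -/
noncomputable def evAdd (l : ℂ) : (ℕ →₀ V) →+ V :=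
  { toFun := ev l, map_zero' := ev_zero' l, map_add' := ev_add' l }

lemma ev_neg' (l : ℂ) (p : ℕ →₀ V) : ev l (-p) = - ev l p :=
  map_neg (evAdd l) p

lemma ev_sub' (l : ℂ) (p q : ℕ →₀ V) : ev l (p - q) = ev l p - ev l q :=
  map_sub (evAdd l) p q

lemma substShift_zero (s : ℂ) : substShift s (0 : ℕ →₀ V) = 0 :=
  Finsupp.sum_zero_index

lemma substShift_add (s : ℂ) (p q : ℕ →₀ V) :
    substShift s (p + q) = substShift s p + substShift s q := by
  refine Finsupp.sum_add_index' (fun j => ?_) (fun j b c => ?_)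
  · simp
  · simp [smul_add, Finsupp.single_add, Finset.sum_add_distrib]

lemma ev_substShift (ν s : ℂ) (p : ℕ →₀ V) :
    ev ν (substShift s p) = ev (ν - s) p := by
  show (evAdd ν) (substShift s p) = _
  rw [substShift, map_finsuppSum]
  refine Finsupp.sum_congr fun j _ => ?_
  rw [map_sum]
  have : ∀ k ∈ Finset.range (j + 1),
      (evAdd ν) (Finsupp.single k (((j.choose k : ℂ) * (-s) ^ (j - k)) • p j))
        = (ν ^ k * ((j.choose k : ℂ) * (-s) ^ (j - k))) • p j := by
    intro k _
    show ev ν _ = _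
    rw [ev_single', smul_smul]
  rw [Finset.sum_congr rfl this, ← Finset.sum_smul]
  have key : ∑ k ∈ Finset.range (j + 1), ν ^ k * ((j.choose k : ℂ) * (-s) ^ (j - k))
      = (ν - s) ^ j := by
    rw [show ν - s = ν + (-s) by ring, add_pow]
    exact Finset.sum_congr rfl fun k _ => by ring
  rw [key]

end Helpers

section Helpers2

variable {A : Type*} [AddCommGroup A] [Module ℂ A]

lemma ev_Lstar (mul : A → A → ℕ →₀ A) (ν l : ℂ) (a : A) (g : A → ℕ →₀ ℂ) (b : A) :
    ev ν ((Lstar mul l a g) b) = - ev (ν - l) (g (ev l (mul a b))) := by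
  show ev ν (- substShift l (g (ev l (mul a b)))) = _
  rw [ev_neg', ev_substShift]

lemma Lstar_zero (mul : A → A → ℕ →₀ A) (l : ℂ) (a : A) :
    Lstar mul l a (0 : A → ℕ →₀ ℂ) = 0 := by
  funext b
  show - substShift l ((0 : A → ℕ →₀ ℂ) (ev l (mul a b))) = 0
  simp [substShift_zero]

lemma Lstar_add (mul : A → A → ℕ →₀ A) (l : ℂ) (a : A) (g g' : A → ℕ →₀ ℂ) :
    Lstar mul l a (g + g') = Lstar mul l a g + Lstar mul l a g' := by
  funext b
  show - substShift l ((g + g') (ev l (mul a b)))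
    = - substShift l (g (ev l (mul a b))) + - substShift l (g' (ev l (mul a b)))
  rw [Pi.add_apply, substShift_add]; abel

lemma Dd_zero : Dd (0 : A → ℕ →₀ ℂ) = 0 := by
  funext a; simp [Dd]

lemma Dd_add (f g : A → ℕ →₀ ℂ) : Dd (f + g) = Dd f + Dd g := by
  funext a
  show - Finsupp.mapDomain (· + 1) ((f + g) a)
    = - Finsupp.mapDomain (· + 1) (f a) + - Finsupp.mapDomain (· + 1) (g a)
  rw [Pi.add_apply, Finsupp.mapDomain_add]; abel

/-- The explicit equivalence built from `θ`. -/
noncomputable def PhiOf (θ : A → (A → ℕ →₀ ℂ)) :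
    A × (A → ℕ →₀ ℂ) → A × (A → ℕ →₀ ℂ) :=
  fun x => (x.1, x.2 + θ x.1)

lemma phiOf_isEquiv (D : Module.End ℂ A) (mul : A → A → ℕ →₀ A)
    (ω₁ ω₂ : ℂ → A → A → (A → ℕ →₀ ℂ)) (θ : A → (A → ℕ →₀ ℂ)) (hθ : IsTheta D θ)
    (h : ∀ (l : ℂ) (a b : A),
      ω₁ l a b - ω₂ l a b = Lstar mul l a (θ b) - θ (ev l (mul a b))) :
    IsExtEquiv D mul ω₁ ω₂ (PhiOf θ) := by
  obtain ⟨hadd, hsmul, hD⟩ := hθ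
  constructor
  · intro x y
    simp only [PhiOf, Prod.fst_add, Prod.snd_add, hadd, Prod.mk_add_mk]
    congr 1; abel
  · intro r x
    simp only [PhiOf, Prod.smul_fst, Prod.smul_snd, hsmul, Prod.smul_mk, smul_add]
  · intro x
    simp only [PhiOf, DX, hD, Dd_add]
  · refine Function.bijective_iff_has_inverse.mpr
      ⟨fun x => (x.1, x.2 - θ x.1), fun x => ?_, fun x => ?_⟩ <;>
      simp [PhiOf]
  · intro l x y
    simp only [PhiOf, pExt, Prod.mk.injEq, Lstar_add, true_and]
    have h' := h l x.1 y.1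
    rw [sub_eq_sub_iff_add_eq_add] at h'
    calc ω₁ l x.1 y.1 + Lstar mul l x.1 y.2 + θ (ev l (mul x.1 y.1))
        = (ω₁ l x.1 y.1 + θ (ev l (mul x.1 y.1))) + Lstar mul l x.1 y.2 := by abel
      _ = (Lstar mul l x.1 (θ y.1) + ω₂ l x.1 y.1) + Lstar mul l x.1 y.2 := by rw [h']
      _ = ω₂ l x.1 y.1 + (Lstar mul l x.1 y.2 + Lstar mul l x.1 (θ y.1)) := by abel
  · intro f
    have h0 : θ 0 = 0 := by
      have := hsmul 0 0
      simpa using this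
    simp [PhiOf, h0]
  · intro x; rfl

lemma theta_zero {D : Module.End ℂ A} {θ : A → (A → ℕ →₀ ℂ)} (hθ : IsTheta D θ) :
    θ 0 = 0 := by
  have := hθ.2.1 0 0
  simpa using this

/-- Extraction of `θ` from an equivalence. -/
lemma extract_theta (D : Module.End ℂ A) (mul : A → A → ℕ →₀ A)
    (ω₁ ω₂ : ℂ → A → A → (A → ℕ →₀ ℂ)) (Φ : A × (A → ℕ →₀ ℂ) → A × (A → ℕ →₀ ℂ))
    (hΦ : IsExtEquiv D mul ω₁ ω₂ Φ) :
    IsTheta D (fun a => (Φ (a, 0)).2) ∧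
    (∀ (l : ℂ) (a b : A),
      ω₁ l a b - ω₂ l a b = Lstar mul l a ((fun a => (Φ (a, 0)).2) b)
        - (fun a => (Φ (a, 0)).2) (ev l (mul a b))) ∧
    (∀ a : A, Φ (a, 0) = (a, (Φ (a, 0)).2)) := by
  set θ : A → (A → ℕ →₀ ℂ) := fun a => (Φ (a, 0)).2 with hθdef
  have hfst : ∀ a : A, Φ (a, 0) = (a, θ a) := by
    intro a
    exact Prod.ext (hΦ.idOnQuot (a, 0)) rfl
  have hadd : ∀ a a', θ (a + a') = θ a + θ a' := by
    intro a a'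
    have : ((a : A), (0 : A → ℕ →₀ ℂ)) + (a', 0) = (a + a', 0) := by
      simp
    have h2 := hΦ.add (a, 0) (a', 0)
    rw [this, hfst, hfst, hfst] at h2
    have := congrArg Prod.snd h2
    simpa using this
  have hsmul : ∀ (r : ℂ) (a : A), θ (r • a) = r • θ a := by
    intro r a
    have : r • ((a : A), (0 : A → ℕ →₀ ℂ)) = (r • a, 0) := by simp
    have h2 := hΦ.smul r (a, 0)
    rw [this, hfst, hfst] at h2
    have := congrArg Prod.snd h2
    simpa using this
  have hd : ∀ a, θ (D a) = Dd (θ a) := by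
    intro a
    have h2 := hΦ.dcomm (a, 0)
    rw [hfst] at h2
    have h3 : DX D ((a : A), (0 : A → ℕ →₀ ℂ)) = (D a, 0) := by
      simp [DX, Dd_zero]
    rw [h3, hfst] at h2
    have := congrArg Prod.snd h2
    simpa [DX] using this
  refine ⟨⟨hadd, hsmul, hd⟩, ?_, hfst⟩
  intro l a b
  have h2 := hΦ.hom l (a, 0) (b, 0)
  have hL : pExt mul ω₁ l ((a : A), (0 : A → ℕ →₀ ℂ)) (b, 0)
      = (ev l (mul a b), ω₁ l a b) := by
    simp [pExt, Lstar_zero]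
  rw [hL, hfst, hfst] at h2
  have hx : Φ (ev l (mul a b), ω₁ l a b)
      = (ev l (mul a b), θ (ev l (mul a b)) + ω₁ l a b) := by
    have hsplit : ((ev l (mul a b) : A), (ω₁ l a b : A → ℕ →₀ ℂ))
        = (ev l (mul a b), 0) + (0, ω₁ l a b) := by simp
    rw [hsplit, hΦ.add, hfst, hΦ.idOnDual]
    simp
  rw [hx] at h2
  have h3 := congrArg Prod.snd h2
  simp only [pExt] at h3
  rw [sub_eq_sub_iff_add_eq_add]
  calc ω₁ l a b + θ (ev l (mul a b))
      = θ (ev l (mul a b)) + ω₁ l a b := by abel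
    _ = ω₂ l a b + Lstar mul l a (θ b) := h3
    _ = Lstar mul l a (θ b) + ω₂ l a b := by abel

end Helpers2

/-- Let `A` be a left-symmetric conformal algebra and
`ω¹, ω²` two invariant `2`-cocycles with values in `A^{*c}`.
(i) `T^*_{ω¹} A` and `T^*_{ω²} A` are equivalent iff there is
`θ ∈ C¹(A, A^{*c})` with `ω¹_λ(a,b) - ω²_λ(a,b) = (L^*_A(a))_λ θ(b) - θ(a_λ b)`.
(ii) In that case `β_λ(a,b) = ½ (θ(a)_λ b + θ(b)_{-λ} a)` is a symmetric
invariant bilinear form on `A`.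
(iii) The extensions are isometrically equivalent iff moreover `β = 0`. -/
theorem tstar_extension_equivalence
    (D : Module.End ℂ A) (mul : A → A → ℕ →₀ A)
    (ω₁ ω₂ : ℂ → A → A → (A → ℕ →₀ ℂ))
    (hA : IsLSC D mul)
    (hω₁ : IsC2Dual D ω₁) (hω₂ : IsC2Dual D ω₂)
    (hc₁ : IsCocycleDual D mul ω₁) (hc₂ : IsCocycleDual D mul ω₂)
    (hi₁ : IsInvariantDual ω₁) (hi₂ : IsInvariantDual ω₂) :
    ((∃ Φ, IsExtEquiv D mul ω₁ ω₂ Φ) ↔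
        ∃ θ : A → (A → ℕ →₀ ℂ), IsTheta D θ ∧
          ∀ (l : ℂ) (a b : A),
            ω₁ l a b - ω₂ l a b = Lstar mul l a (θ b) - θ (ev l (mul a b))) ∧
    (∀ θ : A → (A → ℕ →₀ ℂ), IsTheta D θ →
      (∀ (l : ℂ) (a b : A),
        ω₁ l a b - ω₂ l a b = Lstar mul l a (θ b) - θ (ev l (mul a b))) →
      ((∀ (l : ℂ) (a b : A), betaEv θ l a b = betaEv θ (-l) b a) ∧
       (∀ (l m : ℂ) (a b c : A),
         betaEv θ (l + m) (ev l (mul a b)) c - betaEv θ l a (ev m (mul b c)) =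
           betaEv θ (l + m) (ev m (mul b a)) c - betaEv θ m b (ev l (mul a c))))) ∧
    ((∃ Φ, IsExtEquiv D mul ω₁ ω₂ Φ ∧
        ∀ (l : ℂ) (x y : A × (A → ℕ →₀ ℂ)), Bev l (Φ x) (Φ y) = Bev l x y) ↔
      ∃ θ : A → (A → ℕ →₀ ℂ), IsTheta D θ ∧
        (∀ (l : ℂ) (a b : A),
          ω₁ l a b - ω₂ l a b = Lstar mul l a (θ b) - θ (ev l (mul a b))) ∧
        ∀ (l : ℂ) (a b : A), betaEv θ l a b = 0) := by
  refine ⟨?_, ?_, ?_⟩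
  · constructor
    · rintro ⟨Φ, hΦ⟩
      obtain ⟨hθ, hco, -⟩ := extract_theta D mul ω₁ ω₂ Φ hΦ
      exact ⟨_, hθ, hco⟩
    · rintro ⟨θ, hθ, h⟩
      exact ⟨PhiOf θ, phiOf_isEquiv D mul ω₁ ω₂ θ hθ h⟩
  · intro θ hθ h
    constructor
    · intro l a b
      simp only [betaEv, neg_neg]
      ring
    · intro l m a b c
      have keyf : ∀ (ν l : ℂ) (a b c : A), ev ν ((ω₁ l a b) c)
          = ev ν ((ω₂ l a b) c) - ev (ν - l) ((θ b) (ev l (mul a c)))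
            - ev ν ((θ (ev l (mul a b))) c) := by
        intro ν l a b c
        have h1 := congrFun (h l a b) c
        rw [Pi.sub_apply, Pi.sub_apply] at h1
        have h2 := congrArg (ev ν) h1
        rw [ev_sub', ev_sub', ev_Lstar] at h2
        linear_combination h2
      have H1 := hi₁ l m a b c
      have H2 := hi₂ l m a b c
      simp only [keyf] at H1
      simp only [show (l + m) - l = m from by ring, show (l + m) - m = l from by ring,
        show (-l) - m = -(l + m) from by ring, show (-m) - l = -(l + m) from by ring] at H1
      simp only [betaEv]
      linear_combination (2⁻¹ : ℂ) * H2 - (2⁻¹ : ℂ) * H1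
  · constructor
    · rintro ⟨Φ, hΦ, hB⟩
      obtain ⟨hθ, hco, hfst⟩ := extract_theta D mul ω₁ ω₂ Φ hΦ
      refine ⟨_, hθ, hco, ?_⟩
      intro l a b
      have hB1 := hB l (a, 0) (b, 0)
      rw [hfst a, hfst b] at hB1
      simp only [Bev, Pi.zero_apply, ev_zero', add_zero, zero_add] at hB1
      simp only [betaEv]
      linear_combination (2⁻¹ : ℂ) * hB1
    · rintro ⟨θ, hθ, hco, hβ⟩
      refine ⟨PhiOf θ, phiOf_isEquiv D mul ω₁ ω₂ θ hθ hco, ?_⟩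
      intro l x y
      have h0 : ev l ((θ x.1) y.1) + ev (-l) ((θ y.1) x.1) = 0 := by
        have hb := hβ l x.1 y.1
        simp only [betaEv] at hb
        linear_combination 2 * hb
      simp only [Bev, PhiOf, Pi.add_apply, ev_add']
      linear_combination h0

end LSCpaper
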